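/- Let S be a real n×m matrix, let C = (r, a, b) be an e-cycle of G(S), and let D be an S-to-R path of G(S), given by (p, u, w), whose initial S-vertex u 0 equals a J for some J and whose terminal R-vertex w p equals b K for some K, such that no edge of D is an edge of C and no vertex of D other than u 0 and w p lies on C. Then G(S) contains two e-cycles with distinct edge sets having S-to-R intersection. -/

import Mathlib

namespace SRGraph

variable {n m : ℕ}

/-- A cycle of the SR graph `G(S)`: `r ≥ 2` together with injective maps
`a : Fin r → Fin n` (S-vertices) and `b : Fin r → Fin m` (R-vertices) such that the
entries `S (a j) (b j)` and `S (a j) (b (j+1))` (indices mod `r`) are all nonzero. -/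
def IsCyc (S : Matrix (Fin n) (Fin m) ℝ) {r : ℕ} (a : Fin r → Fin n) (b : Fin r → Fin m) :
    Prop :=
  2 ≤ r ∧ Function.Injective a ∧ Function.Injective b ∧
    (∀ j, S (a j) (b j) ≠ 0) ∧ (∀ j, S (a j) (b (finRotate r j)) ≠ 0)

/-- The parity `P(C) = (-1)^r ∏_j sign(S (a j) (b j)) · sign(S (a j) (b (j+1)))` of a
cycle; the cycle is an e-cycle if this is `1` and an o-cycle if it is `-1`. -/
noncomputable def parity (S : Matrix (Fin n) (Fin m) ℝ) {r : ℕ}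
    (a : Fin r → Fin n) (b : Fin r → Fin m) : ℝ :=
  (-1 : ℝ) ^ r *
    ∏ j : Fin r, Real.sign (S (a j) (b j)) * Real.sign (S (a j) (b (finRotate r j)))

/-- A cycle is an s-cycle when the products of the absolute values of the entries on the
two halves of its disconnecting partition agree. -/
def IsSCyc (S : Matrix (Fin n) (Fin m) ℝ) {r : ℕ} (a : Fin r → Fin n)
    (b : Fin r → Fin m) : Prop :=
  ∏ j : Fin r, |S (a j) (b j)| = ∏ j : Fin r, |S (a j) (b (finRotate r j))|

/-- The edge set of a cycle: the `2r` pairs `(a j, b j)` and `(a j, b (j+1))`. -/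
def cycEdges {r : ℕ} (a : Fin r → Fin n) (b : Fin r → Fin m) : Set (Fin n × Fin m) :=
  {e | ∃ j : Fin r, e = (a j, b j) ∨ e = (a j, b (finRotate r j))}

/-- The vertex set of a cycle inside `Fin n ⊕ Fin m`. -/
def cycVerts {r : ℕ} (a : Fin r → Fin n) (b : Fin r → Fin m) : Set (Fin n ⊕ Fin m) :=
  Set.range (Sum.inl ∘ a) ∪ Set.range (Sum.inr ∘ b)

/-- Adjacency relation on `Fin n ⊕ Fin m` determined by a set `E` of (S,R) edges. -/
def adjOf (E : Set (Fin n × Fin m)) : (Fin n ⊕ Fin m) → (Fin n ⊕ Fin m) → Prop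
  | Sum.inl i, Sum.inr j => (i, j) ∈ E
  | Sum.inr j, Sum.inl i => (i, j) ∈ E
  | _, _ => False

/-- The connected component of `v` in the subgraph with vertex set `V` and edge set `E`. -/
def componentOf (E : Set (Fin n × Fin m)) (V : Set (Fin n ⊕ Fin m))
    (v : Fin n ⊕ Fin m) : Set (Fin n ⊕ Fin m) :=
  {x ∈ V | Relation.ReflTransGen (adjOf E) v x}

/-- Vertex set of an S-to-R path `u 0 – w 0 – u 1 – ⋯ – u p – w p`. -/
def pathVerts {p : ℕ} (u : Fin (p + 1) → Fin n) (w : Fin (p + 1) → Fin m) :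
    Set (Fin n ⊕ Fin m) :=
  Set.range (Sum.inl ∘ u) ∪ Set.range (Sum.inr ∘ w)

/-- Edge set (the `2p+1` pairs `(u i, w i)` and `(u (i+1), w i)`) of an S-to-R path. -/
def pathEdges {p : ℕ} (u : Fin (p + 1) → Fin n) (w : Fin (p + 1) → Fin m) :
    Set (Fin n × Fin m) :=
  {e | ∃ i : Fin (p + 1), e = (u i, w i)} ∪ {e | ∃ i : Fin p, e = (u i.succ, w i.castSucc)}

/-- The subgraph with (nonempty) vertex set `V` and edge set `E` has all of its connected
components equal to paths joining an S-vertex to an R-vertex. -/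
def SRIntersection (V : Set (Fin n ⊕ Fin m)) (E : Set (Fin n × Fin m)) : Prop :=
  V.Nonempty ∧
    ∀ v ∈ V, ∃ (p : ℕ) (u : Fin (p + 1) → Fin n) (w : Fin (p + 1) → Fin m),
      Function.Injective u ∧ Function.Injective w ∧
      pathVerts u w = componentOf E V v ∧
      pathEdges u w = {e ∈ E | Sum.inl e.1 ∈ componentOf E V v}

/-- `G(S)` contains two e-cycles, with distinct edge sets, having S-to-R intersection. -/
def TwoECyclesWithSRIntersection (S : Matrix (Fin n) (Fin m) ℝ) : Prop :=
  ∃ (r₁ : ℕ) (a₁ : Fin r₁ → Fin n) (b₁ : Fin r₁ → Fin m)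
    (r₂ : ℕ) (a₂ : Fin r₂ → Fin n) (b₂ : Fin r₂ → Fin m),
    IsCyc S a₁ b₁ ∧ parity S a₁ b₁ = 1 ∧ IsCyc S a₂ b₂ ∧ parity S a₂ b₂ = 1 ∧
    cycEdges a₁ b₁ ≠ cycEdges a₂ b₂ ∧
    SRIntersection (cycVerts a₁ b₁ ∩ cycVerts a₂ b₂) (cycEdges a₁ b₁ ∩ cycEdges a₂ b₂)

/-- Condition (*): all e-cycles are s-cycles, and no two e-cycles (with distinct edge
sets) have S-to-R intersection. -/
def ConditionStar (S : Matrix (Fin n) (Fin m) ℝ) : Prop :=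
  (∀ (r : ℕ) (a : Fin r → Fin n) (b : Fin r → Fin m),
      IsCyc S a b → parity S a b = 1 → IsSCyc S a b) ∧
  ¬ TwoECyclesWithSRIntersection S

/-- Two real matrices have the same sign pattern. -/
def SameSignPattern {k l : ℕ} (B M : Matrix (Fin k) (Fin l) ℝ) : Prop :=
  ∀ i j, Real.sign (B i j) = Real.sign (M i j)

/-- A square real matrix is sign nonsingular if every matrix with the same sign pattern
has nonzero determinant. -/
def SignNonsingular {k : ℕ} (M : Matrix (Fin k) (Fin k) ℝ) : Prop :=
  ∀ B : Matrix (Fin k) (Fin k) ℝ, SameSignPattern B M → B.det ≠ 0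

/-- A square real matrix is sign singular if every matrix with the same sign pattern has
zero determinant. -/
def SignSingular {k : ℕ} (M : Matrix (Fin k) (Fin k) ℝ) : Prop :=
  ∀ B : Matrix (Fin k) (Fin k) ℝ, SameSignPattern B M → B.det = 0

/-- `S` is strongly sign determined: every square submatrix of `S` is sign nonsingular or
has determinant zero. -/
def SSD (S : Matrix (Fin n) (Fin m) ℝ) : Prop :=
  ∀ (k : ℕ) (ρ : Fin k → Fin n) (c : Fin k → Fin m),
    Function.Injective ρ → Function.Injective c →
    SignNonsingular (S.submatrix ρ c) ∨ (S.submatrix ρ c).det = 0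

end SRGraph

namespace SRGraph

/-- An S-to-R path of `G(S)`: `p ≥ 0` and injective `u : Fin (p+1) → Fin n`,
`w : Fin (p+1) → Fin m` with `S (u i) (w i) ≠ 0` for all `i` and
`S (u (i+1)) (w i) ≠ 0` for all `i < p`; it joins S-vertex `u 0` to R-vertex `w p`. -/
def IsSRPath (S : Matrix (Fin n) (Fin m) ℝ) {p : ℕ}
    (u : Fin (p + 1) → Fin n) (w : Fin (p + 1) → Fin m) : Prop :=
  Function.Injective u ∧ Function.Injective w ∧
    (∀ i, S (u i) (w i) ≠ 0) ∧ (∀ i : Fin p, S (u i.succ) (w i.castSucc) ≠ 0)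

end SRGraph

namespace SRGraph

set_option maxHeartbeats 2000000

variable {n m : ℕ}

lemma adjOf_symm (E : Set (Fin n × Fin m)) : Symmetric (adjOf E) := by
  intro v1 v2 h
  cases v1 <;> cases v2 <;> simp [adjOf] at h ⊢ <;> exact h

lemma path_conn {p : ℕ} (u : Fin (p + 1) → Fin n) (w : Fin (p + 1) → Fin m) :
    ∀ v1 ∈ pathVerts u w, ∀ v2 ∈ pathVerts u w,
      Relation.ReflTransGen (adjOf (pathEdges u w)) v1 v2 := by
  have key : ∀ k (h : k < p + 1),
      Relation.ReflTransGen (adjOf (pathEdges u w)) (Sum.inl (u 0)) (Sum.inl (u ⟨k, h⟩)) ∧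
      Relation.ReflTransGen (adjOf (pathEdges u w)) (Sum.inl (u 0)) (Sum.inr (w ⟨k, h⟩)) := by
    intro k
    induction k with
    | zero =>
      intro h
      have h0 : (⟨0, h⟩ : Fin (p+1)) = 0 := rfl
      rw [h0]
      refine ⟨Relation.ReflTransGen.refl, Relation.ReflTransGen.single ?_⟩
      exact Or.inl ⟨0, rfl⟩
    | succ k ih =>
      intro h
      have hk : k < p + 1 := by omega
      have hkp : k < p := by omega
      obtain ⟨h1, h2⟩ := ih hk
      have step1 : adjOf (pathEdges u w) (Sum.inr (w ⟨k, hk⟩)) (Sum.inl (u ⟨k+1, h⟩)) := by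
        show (u ⟨k+1, h⟩, w ⟨k, hk⟩) ∈ pathEdges u w
        refine Or.inr ⟨⟨k, hkp⟩, ?_⟩
        simp [Fin.succ, Fin.castSucc, Fin.castAdd, Fin.castLE]
      have h1' : Relation.ReflTransGen (adjOf (pathEdges u w)) (Sum.inl (u 0))
          (Sum.inl (u ⟨k+1, h⟩)) := h2.tail step1
      refine ⟨h1', h1'.tail ?_⟩
      exact Or.inl ⟨⟨k+1, h⟩, rfl⟩
  have toV : ∀ v ∈ pathVerts u w,
      Relation.ReflTransGen (adjOf (pathEdges u w)) (Sum.inl (u 0)) v := by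
    rintro v (⟨i, rfl⟩ | ⟨i, rfl⟩)
    · exact (key i.val i.isLt).1
    · exact (key i.val i.isLt).2
  intro v1 h1 v2 h2
  have s1 := (@Relation.ReflTransGen.symmetric _ _ ⟨adjOf_symm _⟩).symm _ _ (toV v1 h1)
  exact s1.trans (toV v2 h2)

lemma srIntersection_path {p : ℕ} (u : Fin (p + 1) → Fin n) (w : Fin (p + 1) → Fin m)
    (hu : Function.Injective u) (hw : Function.Injective w) :
    SRIntersection (pathVerts u w) (pathEdges u w) := by
  constructor
  · exact ⟨Sum.inl (u 0), Or.inl ⟨0, rfl⟩⟩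
  · intro v hv
    have hcomp : componentOf (pathEdges u w) (pathVerts u w) v = pathVerts u w := by
      ext x
      constructor
      · rintro ⟨hx, -⟩; exact hx
      · intro hx; exact ⟨hx, path_conn u w v hv x hx⟩
    refine ⟨p, u, w, hu, hw, by rw [hcomp], ?_⟩
    rw [hcomp]
    ext e
    constructor
    · intro he
      refine ⟨he, ?_⟩
      rcases he with ⟨i, rfl⟩ | ⟨i, rfl⟩
      · exact Or.inl ⟨i, rfl⟩
      · exact Or.inl ⟨i.succ, rfl⟩
    · rintro ⟨he, -⟩; exact he


noncomputable def pathSign (S : Matrix (Fin n) (Fin m) ℝ) {p : ℕ}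
    (u : Fin (p + 1) → Fin n) (w : Fin (p + 1) → Fin m) : ℝ :=
  (∏ i : Fin (p + 1), Real.sign (S (u i) (w i))) *
    ∏ i : Fin p, Real.sign (S (u i.succ) (w i.castSucc))

noncomputable def fD (S : Matrix (Fin n) (Fin m) ℝ) {p : ℕ}
    (u : Fin (p + 1) → Fin n) (w : Fin (p + 1) → Fin m) : ℕ → ℝ :=
  fun k => if h : k < p + 1 then Real.sign (S (u ⟨k, h⟩) (w ⟨k, h⟩)) else 1

noncomputable def fO (S : Matrix (Fin n) (Fin m) ℝ) {p : ℕ}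
    (u : Fin (p + 1) → Fin n) (w : Fin (p + 1) → Fin m) : ℕ → ℝ :=
  fun k => if h : k < p then Real.sign (S (u ⟨k + 1, by omega⟩) (w ⟨k, by omega⟩)) else 1

noncomputable def fR (S : Matrix (Fin n) (Fin m) ℝ) {p : ℕ}
    (a : Fin (p + 1) → Fin n) (b : Fin (p + 1) → Fin m) : ℕ → ℝ :=
  fun k => if h : k < p + 1 then
    Real.sign (S (a ⟨k, h⟩) (b (finRotate (p + 1) ⟨k, h⟩))) else 1

lemma sign_pm {x : ℝ} (h : x ≠ 0) : Real.sign x = 1 ∨ Real.sign x = -1 := by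
  rcases lt_trichotomy x 0 with h'|h'|h'
  · right; exact Real.sign_of_neg h'
  · exact absurd h' h
  · left; exact Real.sign_of_pos h'

lemma sign_mul_self {x : ℝ} (h : x ≠ 0) : Real.sign x * Real.sign x = 1 := by
  rcases sign_pm h with h'|h' <;> rw [h'] <;> norm_num

open Finset in
lemma prod_fD (S : Matrix (Fin n) (Fin m) ℝ) {p : ℕ}
    (u : Fin (p + 1) → Fin n) (w : Fin (p + 1) → Fin m) :
    ∏ i : Fin (p + 1), Real.sign (S (u i) (w i)) = ∏ k ∈ range (p + 1), fD S u w k := by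
  rw [← Fin.prod_univ_eq_prod_range (fD S u w) (p + 1)]
  apply Finset.prod_congr rfl
  intro i _
  simp only [fD]
  rw [dif_pos i.isLt]

open Finset in
lemma prod_fO (S : Matrix (Fin n) (Fin m) ℝ) {p : ℕ}
    (u : Fin (p + 1) → Fin n) (w : Fin (p + 1) → Fin m) :
    ∏ i : Fin p, Real.sign (S (u i.succ) (w i.castSucc)) = ∏ k ∈ range p, fO S u w k := by
  rw [← Fin.prod_univ_eq_prod_range (fO S u w) p]
  apply Finset.prod_congr rfl
  intro i _
  simp only [fO]
  rw [dif_pos i.isLt]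
  rfl

open Finset in
lemma prod_fR (S : Matrix (Fin n) (Fin m) ℝ) {p : ℕ}
    (a : Fin (p + 1) → Fin n) (b : Fin (p + 1) → Fin m) :
    ∏ i : Fin (p + 1), Real.sign (S (a i) (b (finRotate (p + 1) i))) =
      ∏ k ∈ range (p + 1), fR S a b k := by
  rw [← Fin.prod_univ_eq_prod_range (fR S a b) (p + 1)]
  apply Finset.prod_congr rfl
  intro i _
  simp only [fR]
  rw [dif_pos i.isLt]

lemma pathSign_mul_self {S : Matrix (Fin n) (Fin m) ℝ} {p : ℕ}
    {u : Fin (p + 1) → Fin n} {w : Fin (p + 1) → Fin m} (hD : IsSRPath S u w) :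
    pathSign S u w * pathSign S u w = 1 := by
  rw [pathSign]
  have hA : (∏ i : Fin (p + 1), Real.sign (S (u i) (w i))) *
      (∏ i : Fin (p + 1), Real.sign (S (u i) (w i))) = 1 := by
    rw [← Finset.prod_mul_distrib]
    apply Finset.prod_eq_one
    intro i _
    exact sign_mul_self (hD.2.2.1 i)
  have hB : (∏ i : Fin p, Real.sign (S (u i.succ) (w i.castSucc))) *
      (∏ i : Fin p, Real.sign (S (u i.succ) (w i.castSucc))) = 1 := by
    rw [← Finset.prod_mul_distrib]
    apply Finset.prod_eq_one
    intro i _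
    exact sign_mul_self (hD.2.2.2 i)
  nlinarith [hA, hB]

lemma parity_mul_self {S : Matrix (Fin n) (Fin m) ℝ} {r : ℕ}
    {a : Fin r → Fin n} {b : Fin r → Fin m} (hC : IsCyc S a b) :
    parity S a b * parity S a b = 1 := by
  rw [parity]
  have hA : (∏ j : Fin r, Real.sign (S (a j) (b j)) * Real.sign (S (a j) (b (finRotate r j)))) *
      (∏ j : Fin r, Real.sign (S (a j) (b j)) * Real.sign (S (a j) (b (finRotate r j)))) = 1 := by
    rw [← Finset.prod_mul_distrib]
    apply Finset.prod_eq_one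
    intro j _
    have h1 := sign_mul_self (hC.2.2.2.1 j)
    have h2 := sign_mul_self (hC.2.2.2.2 j)
    nlinarith [h1, h2]
  have hP : ((-1 : ℝ) ^ r) * ((-1 : ℝ) ^ r) = 1 := by
    rw [← pow_add]
    have : r + r = 2 * r := by omega
    rw [this, pow_mul]
    norm_num
  nlinarith [hA, hP]


lemma rot_val {N : ℕ} (hN : 1 ≤ N) (j : Fin (N + 1)) :
    (finRotate (N + 1)) j = ⟨if (j : ℕ) = N then 0 else (j : ℕ) + 1, by split <;> omega⟩ := by
  rw [finRotate_succ_apply]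
  apply Fin.ext
  rw [Fin.val_add_one]
  by_cases h : j = Fin.last N
  · simp [h, Fin.last]
  · have h2 : (j : ℕ) ≠ N := fun hh => h (Fin.ext hh)
    simp [h, h2]

lemma IsSRPath.diag' {S : Matrix (Fin n) (Fin m) ℝ} {p : ℕ}
    {u : Fin (p + 1) → Fin n} {w : Fin (p + 1) → Fin m} (hD : IsSRPath S u w)
    (k : ℕ) (hk : k < p + 1) : S (u ⟨k, hk⟩) (w ⟨k, hk⟩) ≠ 0 := hD.2.2.1 _

lemma IsSRPath.off' {S : Matrix (Fin n) (Fin m) ℝ} {p : ℕ}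
    {u : Fin (p + 1) → Fin n} {w : Fin (p + 1) → Fin m} (hD : IsSRPath S u w)
    (k : ℕ) (hk : k < p) :
    S (u ⟨k + 1, by omega⟩) (w ⟨k, by omega⟩) ≠ 0 := by
  simpa using hD.2.2.2 ⟨k, hk⟩

def glueA {p q : ℕ} (u : Fin (p + 1) → Fin n) (x : Fin (q + 1) → Fin n) :
    Fin (p + q + 1) → Fin n :=
  fun j => if h : (j : ℕ) ≤ p then u ⟨j, by omega⟩
    else x ⟨q + 1 + p - j, by have := j.isLt; omega⟩

def glueB {p q : ℕ} (w : Fin (p + 1) → Fin m) (y : Fin (q + 1) → Fin m) :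
    Fin (p + q + 1) → Fin m :=
  fun j => if h0 : (j : ℕ) = 0 then y 0
    else if h : (j : ℕ) ≤ p then w ⟨(j : ℕ) - 1, by omega⟩
    else y ⟨q + 1 + p - j, by have := j.isLt; omega⟩

set_option maxHeartbeats 2000000

section Glue

variable {S : Matrix (Fin n) (Fin m) ℝ} {p q : ℕ}
  {u : Fin (p + 1) → Fin n} {w : Fin (p + 1) → Fin m}
  {x : Fin (q + 1) → Fin n} {y : Fin (q + 1) → Fin m}

lemma glueA_mk (k : ℕ) (h : k < p + q + 1) :
    glueA u x ⟨k, h⟩ =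
      if hp : k ≤ p then u ⟨k, by omega⟩ else x ⟨q + 1 + p - k, by omega⟩ := rfl

lemma glueB_mk (k : ℕ) (h : k < p + q + 1) :
    glueB w y ⟨k, h⟩ =
      if h0 : k = 0 then y 0
      else if hp : k ≤ p then w ⟨k - 1, by omega⟩
      else y ⟨q + 1 + p - k, by omega⟩ := rfl


lemma glueB_inj (hD : IsSRPath S u w) (hA : IsSRPath S x y)
    (hyq : y (Fin.last q) = w (Fin.last p))
    (hcross : ∀ s, s ∈ pathVerts u w → s ∈ pathVerts x y →
      s = Sum.inl (u 0) ∨ s = Sum.inr (w (Fin.last p))) :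
    Function.Injective (glueB (p := p) w y) := by
  have hwy : ∀ (k : ℕ) (hk : k < p) (l : Fin (q + 1)), w ⟨k, by omega⟩ ≠ y l := by
    intro k hk l heq
    have hv : Sum.inr (w ⟨k, by omega⟩) ∈ pathVerts u w := Or.inr ⟨_, rfl⟩
    have hv2 : Sum.inr (w ⟨k, by omega⟩) ∈ pathVerts x y := by
      rw [heq]; exact Or.inr ⟨_, rfl⟩
    rcases hcross _ hv hv2 with h | h
    · simp at h
    · have := hD.2.1 (Sum.inr.inj h)
      simp [Fin.ext_iff, Fin.last] at this
      omega
  intro j1 j2 heq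
  simp only [glueB] at heq
  apply Fin.ext
  rcases Nat.eq_zero_or_pos (j1 : ℕ) with hz1 | hz1 <;>
    rcases Nat.eq_zero_or_pos (j2 : ℕ) with hz2 | hz2
  · omega
  · simp only [dif_pos hz1, dif_neg (show ¬(j2 : ℕ) = 0 by omega)] at heq
    by_cases hp2 : (j2 : ℕ) ≤ p
    · rw [dif_pos hp2] at heq
      exact absurd heq.symm (hwy ((j2 : ℕ) - 1) (by omega) _)
    · rw [dif_neg hp2] at heq
      have := hA.2.1 heq
      simp [Fin.ext_iff] at this
      have := j2.isLt
      omega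
  · simp only [dif_neg (show ¬(j1 : ℕ) = 0 by omega), dif_pos hz2] at heq
    by_cases hp1 : (j1 : ℕ) ≤ p
    · rw [dif_pos hp1] at heq
      exact absurd heq (hwy ((j1 : ℕ) - 1) (by omega) _)
    · rw [dif_neg hp1] at heq
      have := hA.2.1 heq
      simp [Fin.ext_iff] at this
      have := j1.isLt
      omega
  · simp only [dif_neg (show ¬(j1 : ℕ) = 0 by omega),
      dif_neg (show ¬(j2 : ℕ) = 0 by omega)] at heq
    by_cases hp1 : (j1 : ℕ) ≤ p <;> by_cases hp2 : (j2 : ℕ) ≤ p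
    · simp only [dif_pos hp1, dif_pos hp2] at heq
      have := hD.2.1 heq
      simp [Fin.ext_iff] at this
      omega
    · simp only [dif_pos hp1, dif_neg hp2] at heq
      exact absurd heq (hwy ((j1 : ℕ) - 1) (by omega) _)
    · simp only [dif_neg hp1, dif_pos hp2] at heq
      exact absurd heq.symm (hwy ((j2 : ℕ) - 1) (by omega) _)
    · simp only [dif_neg hp1, dif_neg hp2] at heq
      have := hA.2.1 heq
      simp [Fin.ext_iff] at this
      have b1 := j1.isLt; have b2 := j2.isLt
      omega

lemma glueA_inj (hD : IsSRPath S u w) (hA : IsSRPath S x y)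
    (hx0 : x 0 = u 0)
    (hcross : ∀ s, s ∈ pathVerts u w → s ∈ pathVerts x y →
      s = Sum.inl (u 0) ∨ s = Sum.inr (w (Fin.last p))) :
    Function.Injective (glueA (p := p) u x) := by
  intro j1 j2 heq
  simp only [glueA] at heq
  split_ifs at heq with h1 h2 h2
  · have := hD.1 heq
    apply Fin.ext
    simpa [Fin.ext_iff] using this
  · exfalso
    have hv : Sum.inl (u ⟨(j1 : ℕ), by omega⟩) ∈ pathVerts u w := Or.inl ⟨_, rfl⟩
    have hv2 : Sum.inl (u ⟨(j1 : ℕ), by omega⟩) ∈ pathVerts x y := by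
      rw [heq]; exact Or.inl ⟨_, rfl⟩
    rcases hcross _ hv hv2 with h | h
    · have h0 : (⟨(j1 : ℕ), by omega⟩ : Fin (p + 1)) = 0 := hD.1 (Sum.inl.inj h)
      have hx : x ⟨q + 1 + p - (j2 : ℕ), by have := j2.isLt; omega⟩ = x 0 := by
        rw [← heq, h0, hx0]
      have := hA.1 hx
      simp [Fin.ext_iff] at this
      have := j2.isLt
      omega
    · simp at h
  · exfalso
    have hv : Sum.inl (u ⟨(j2 : ℕ), by omega⟩) ∈ pathVerts u w := Or.inl ⟨_, rfl⟩
    have hv2 : Sum.inl (u ⟨(j2 : ℕ), by omega⟩) ∈ pathVerts x y := by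
      rw [← heq]; exact Or.inl ⟨_, rfl⟩
    rcases hcross _ hv hv2 with h | h
    · have h0 : (⟨(j2 : ℕ), by omega⟩ : Fin (p + 1)) = 0 := hD.1 (Sum.inl.inj h)
      have hx : x ⟨q + 1 + p - (j1 : ℕ), by have := j1.isLt; omega⟩ = x 0 := by
        rw [heq, h0, hx0]
      have := hA.1 hx
      simp [Fin.ext_iff] at this
      have := j1.isLt
      omega
    · simp at h
  · have := hA.1 heq
    simp [Fin.ext_iff] at this
    apply Fin.ext
    have b1 := j1.isLt; have b2 := j2.isLt
    omega

lemma glue_entries_diag (hD : IsSRPath S u w) (hA : IsSRPath S x y) (hx0 : x 0 = u 0) :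
    ∀ j, S (glueA u x j) (glueB w y j) ≠ 0 := by
  intro j
  obtain ⟨jv, hj⟩ := j
  rw [glueA_mk, glueB_mk]
  rcases Nat.eq_zero_or_pos jv with rfl | hz
  · rw [dif_pos (by omega : 0 ≤ p), dif_pos rfl]
    have h0 : (⟨0, by omega⟩ : Fin (p + 1)) = 0 := by apply Fin.ext; simp
    rw [h0, ← hx0]
    exact hA.2.2.1 0
  · by_cases hp : jv ≤ p
    · rw [dif_pos hp, dif_neg (by omega), dif_pos hp]
      have h2 := hD.off' (jv - 1) (by omega)
      have h1 : (⟨jv - 1 + 1, by omega⟩ : Fin (p + 1)) = ⟨jv, by omega⟩ := by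
        apply Fin.ext; simp; omega
      rw [h1] at h2
      exact h2
    · rw [dif_neg hp, dif_neg (by omega), dif_neg hp]
      exact hA.2.2.1 _

lemma glue_entries_off (hD : IsSRPath S u w) (hA : IsSRPath S x y)
    (hx0 : x 0 = u 0) (hyq : y (Fin.last q) = w (Fin.last p)) (hpq : 1 ≤ p + q) :
    ∀ j, S (glueA u x j) (glueB w y (finRotate (p + q + 1) j)) ≠ 0 := by
  intro j
  obtain ⟨jv, hj⟩ := j
  by_cases hlast : jv = p + q
  · subst hlast
    have hrot : finRotate (p + q + 1) ⟨p + q, hj⟩ = ⟨0, by omega⟩ := by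
      rw [rot_val hpq]; apply Fin.ext; simp
    rw [hrot, glueA_mk, glueB_mk, dif_pos rfl]
    rcases Nat.eq_zero_or_pos q with hq | hq
    · rw [dif_pos (by omega : p + q ≤ p)]
      have h0 : (0 : Fin (q + 1)) = Fin.last q := by apply Fin.ext; simp [Fin.last, hq]
      rw [h0, hyq]
      have hlp : (⟨p + q, by omega⟩ : Fin (p + 1)) = Fin.last p := by
        apply Fin.ext; simp [Fin.last]; omega
      rw [hlp]
      exact hD.2.2.1 _
    · rw [dif_neg (by omega : ¬ p + q ≤ p)]
      have hx1 : (⟨q + 1 + p - (p + q), by omega⟩ : Fin (q + 1)) = ⟨0 + 1, by omega⟩ := by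
        apply Fin.ext; simp; omega
      rw [hx1]
      exact hA.off' 0 (by omega)
  · have hrot : finRotate (p + q + 1) ⟨jv, hj⟩ = ⟨jv + 1, by omega⟩ := by
      rw [rot_val hpq]; apply Fin.ext; simp [hlast]
    rw [hrot, glueA_mk, glueB_mk, dif_neg (show ¬ jv + 1 = 0 by omega)]
    by_cases hp : jv < p
    · rw [dif_pos (show jv ≤ p by omega), dif_pos (show jv + 1 ≤ p by omega)]
      have h1 : (⟨jv + 1 - 1, by omega⟩ : Fin (p + 1)) = ⟨jv, by omega⟩ := by
        apply Fin.ext; simp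
      rw [h1]
      exact hD.2.2.1 _
    · by_cases hpe : jv = p
      · have hq : 1 ≤ q := by omega
        rw [dif_pos (show jv ≤ p by omega), dif_neg (show ¬ jv + 1 ≤ p by omega)]
        have h1 : (⟨q + 1 + p - (jv + 1), by omega⟩ : Fin (q + 1)) = Fin.last q := by
          apply Fin.ext; simp [Fin.last]; omega
        rw [h1, hyq]
        have h2 : (⟨jv, by omega⟩ : Fin (p + 1)) = Fin.last p := by
          apply Fin.ext; simp [Fin.last]; omega
        rw [h2]
        exact hD.2.2.1 _
      · rw [dif_neg (show ¬ jv ≤ p by omega), dif_neg (show ¬ jv + 1 ≤ p by omega)]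
        have h1 : (⟨q + 1 + p - jv, by omega⟩ : Fin (q + 1)) =
            ⟨(q + p - jv) + 1, by omega⟩ := by apply Fin.ext; simp; omega
        have h2 : (⟨q + 1 + p - (jv + 1), by omega⟩ : Fin (q + 1)) =
            ⟨q + p - jv, by omega⟩ := by apply Fin.ext; simp; omega
        rw [h1, h2]
        exact hA.off' _ (by omega : q + p - jv < q)

lemma glue_isCyc (hD : IsSRPath S u w) (hA : IsSRPath S x y)
    (hx0 : x 0 = u 0) (hyq : y (Fin.last q) = w (Fin.last p))
    (hcross : ∀ s, s ∈ pathVerts u w → s ∈ pathVerts x y →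
      s = Sum.inl (u 0) ∨ s = Sum.inr (w (Fin.last p)))
    (hpq : 1 ≤ p + q) :
    IsCyc S (glueA u x) (glueB w y) :=
  ⟨by omega, glueA_inj hD hA hx0 hcross, glueB_inj hD hA hyq hcross,
    glue_entries_diag hD hA hx0, glue_entries_off hD hA hx0 hyq hpq⟩

lemma glue_edges (hx0 : x 0 = u 0) (hyq : y (Fin.last q) = w (Fin.last p))
    (hpq : 1 ≤ p + q) :
    cycEdges (glueA u x) (glueB w y) = pathEdges u w ∪ pathEdges x y := by
  ext e
  constructor
  · rintro ⟨⟨jv, hj⟩, hcase | hcase⟩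
    · rw [glueA_mk, glueB_mk] at hcase
      rcases Nat.eq_zero_or_pos jv with rfl | hz
      · rw [dif_pos (by omega : 0 ≤ p), dif_pos rfl] at hcase
        right; left
        refine ⟨0, ?_⟩
        rw [hcase]
        have h0 : (⟨0, by omega⟩ : Fin (p + 1)) = 0 := by apply Fin.ext; simp
        rw [h0, hx0]
      · by_cases hp : jv ≤ p
        · rw [dif_pos hp, dif_neg (by omega), dif_pos hp] at hcase
          left; right
          refine ⟨⟨jv - 1, by omega⟩, ?_⟩
          rw [hcase]
          have h1 : (⟨jv - 1, by omega⟩ : Fin p).succ = ⟨jv, by omega⟩ := by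
            apply Fin.ext; simp [Fin.succ]; omega
          have h2 : (⟨jv - 1, by omega⟩ : Fin p).castSucc = ⟨jv - 1, by omega⟩ := by
            apply Fin.ext; simp
          rw [h1, h2]
        · rw [dif_neg hp, dif_neg (by omega), dif_neg hp] at hcase
          right; left
          exact ⟨⟨q + 1 + p - jv, by omega⟩, hcase⟩
    · by_cases hlast : jv = p + q
      · subst hlast
        have hrot : finRotate (p + q + 1) ⟨p + q, hj⟩ = ⟨0, by omega⟩ := by
          rw [rot_val hpq]; apply Fin.ext; simp
        rw [hrot, glueA_mk, glueB_mk, dif_pos rfl] at hcase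
        rcases Nat.eq_zero_or_pos q with hq | hq
        · rw [dif_pos (by omega : p + q ≤ p)] at hcase
          left; left
          refine ⟨Fin.last p, ?_⟩
          rw [hcase]
          have h0 : (0 : Fin (q + 1)) = Fin.last q := by apply Fin.ext; simp [Fin.last, hq]
          rw [h0, hyq]
          have h1 : (⟨p + q, by omega⟩ : Fin (p + 1)) = Fin.last p := by
            apply Fin.ext; simp [Fin.last]; omega
          rw [h1]
        · rw [dif_neg (by omega : ¬ p + q ≤ p)] at hcase
          right; right
          refine ⟨⟨0, by omega⟩, ?_⟩
          rw [hcase]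
          have h1 : (⟨q + 1 + p - (p + q), by omega⟩ : Fin (q + 1)) = (⟨0, by omega⟩ : Fin q).succ := by
            apply Fin.ext; simp [Fin.succ]; omega
          have h2 : (0 : Fin (q + 1)) = (⟨0, by omega⟩ : Fin q).castSucc := by
            apply Fin.ext; simp
          rw [h1, h2]
      · have hrot : finRotate (p + q + 1) ⟨jv, hj⟩ = ⟨jv + 1, by omega⟩ := by
          rw [rot_val hpq]; apply Fin.ext; simp [hlast]
        rw [hrot, glueA_mk, glueB_mk, dif_neg (show ¬ jv + 1 = 0 by omega)] at hcase
        by_cases hp : jv < p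
        · rw [dif_pos (show jv ≤ p by omega), dif_pos (show jv + 1 ≤ p by omega)] at hcase
          left; left
          refine ⟨⟨jv, by omega⟩, ?_⟩
          rw [hcase]
          have h1 : (⟨jv + 1 - 1, by omega⟩ : Fin (p + 1)) = ⟨jv, by omega⟩ := by
            apply Fin.ext; simp
          rw [h1]
        · by_cases hpe : jv = p
          · rw [dif_pos (show jv ≤ p by omega), dif_neg (show ¬ jv + 1 ≤ p by omega)] at hcase
            left; left
            refine ⟨Fin.last p, ?_⟩
            rw [hcase]
            have hq : 1 ≤ q := by omega
            have h1 : (⟨q + 1 + p - (jv + 1), by omega⟩ : Fin (q + 1)) = Fin.last q := by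
              apply Fin.ext; simp [Fin.last]; omega
            rw [h1, hyq]
            have h2 : (⟨jv, by omega⟩ : Fin (p + 1)) = Fin.last p := by
              apply Fin.ext; simp [Fin.last]; omega
            rw [h2]
          · rw [dif_neg (show ¬ jv ≤ p by omega), dif_neg (show ¬ jv + 1 ≤ p by omega)] at hcase
            right; right
            refine ⟨⟨q + p - jv, by omega⟩, ?_⟩
            rw [hcase]
            have h1 : (⟨q + 1 + p - jv, by omega⟩ : Fin (q + 1)) =
                (⟨q + p - jv, by omega⟩ : Fin q).succ := by
              apply Fin.ext; simp [Fin.succ]; omega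
            have h2 : (⟨q + 1 + p - (jv + 1), by omega⟩ : Fin (q + 1)) =
                (⟨q + p - jv, by omega⟩ : Fin q).castSucc := by
              apply Fin.ext; simp; omega
            rw [h1, h2]
  · rintro ((⟨i, rfl⟩ | ⟨i, rfl⟩) | (⟨i, rfl⟩ | ⟨i, rfl⟩))
    · -- (u i, w i)
      obtain ⟨iv, hi⟩ := i
      have hjlt : iv < p + q + 1 := by omega
      by_cases hp : iv < p
      · have hrlt : iv + 1 < p + q + 1 := by omega
        have hrot : finRotate (p + q + 1) ⟨iv, hjlt⟩ = ⟨iv + 1, hrlt⟩ := by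
          rw [rot_val hpq]; apply Fin.ext; simp; omega
        have e1 : glueA u x ⟨iv, hjlt⟩ = u ⟨iv, hi⟩ := by
          rw [glueA_mk, dif_pos (show iv ≤ p by omega)]
        have e2 : glueB w y ⟨iv + 1, hrlt⟩ = w ⟨iv, hi⟩ := by
          rw [glueB_mk, dif_neg (show ¬ iv + 1 = 0 by omega),
            dif_pos (show iv + 1 ≤ p by omega)]
          congr 1
        exact ⟨⟨iv, hjlt⟩, Or.inr (by rw [hrot, e1, e2])⟩
      · have hip : iv = p := by omega
        have e1 : glueA u x ⟨iv, hjlt⟩ = u ⟨iv, hi⟩ := by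
          rw [glueA_mk, dif_pos (show iv ≤ p by omega)]
        rcases Nat.eq_zero_or_pos q with hq | hq
        · have hrlt : 0 < p + q + 1 := by omega
          have hrot : finRotate (p + q + 1) ⟨iv, hjlt⟩ = ⟨0, hrlt⟩ := by
            rw [rot_val hpq]; apply Fin.ext; simp; omega
          have e2 : glueB w y ⟨0, hrlt⟩ = w ⟨iv, hi⟩ := by
            rw [glueB_mk, dif_pos rfl]
            have h0 : (0 : Fin (q + 1)) = Fin.last q := by apply Fin.ext; simp [Fin.last, hq]
            rw [h0, hyq]
            congr 1
            apply Fin.ext; simp [Fin.last]; omega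
          exact ⟨⟨iv, hjlt⟩, Or.inr (by rw [hrot, e1, e2])⟩
        · have hrlt : iv + 1 < p + q + 1 := by omega
          have hrot : finRotate (p + q + 1) ⟨iv, hjlt⟩ = ⟨iv + 1, hrlt⟩ := by
            rw [rot_val hpq]; apply Fin.ext; simp; omega
          have e2 : glueB w y ⟨iv + 1, hrlt⟩ = w ⟨iv, hi⟩ := by
            rw [glueB_mk, dif_neg (show ¬ iv + 1 = 0 by omega),
              dif_neg (show ¬ iv + 1 ≤ p by omega)]
            have h0 : (⟨q + 1 + p - (iv + 1), by omega⟩ : Fin (q + 1)) = Fin.last q := by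
              apply Fin.ext; simp [Fin.last]; omega
            rw [h0, hyq]
            congr 1
            apply Fin.ext; simp [Fin.last]; omega
          exact ⟨⟨iv, hjlt⟩, Or.inr (by rw [hrot, e1, e2])⟩
    · -- (u i.succ, w i.castSucc)
      obtain ⟨iv, hi⟩ := i
      have hjlt : iv + 1 < p + q + 1 := by omega
      have e1 : glueA u x ⟨iv + 1, hjlt⟩ = u (⟨iv, hi⟩ : Fin p).succ := by
        rw [glueA_mk, dif_pos (show iv + 1 ≤ p by omega)]
        congr 1
      have e2 : glueB w y ⟨iv + 1, hjlt⟩ = w (⟨iv, hi⟩ : Fin p).castSucc := by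
        rw [glueB_mk, dif_neg (show ¬ iv + 1 = 0 by omega),
          dif_pos (show iv + 1 ≤ p by omega)]
        congr 1
      exact ⟨⟨iv + 1, hjlt⟩, Or.inl (by rw [e1, e2])⟩
    · -- (x i, y i)
      obtain ⟨iv, hi⟩ := i
      rcases Nat.eq_zero_or_pos iv with rfl | hz
      · have hjlt : 0 < p + q + 1 := by omega
        have e1 : glueA u x ⟨0, hjlt⟩ = x ⟨0, hi⟩ := by
          rw [glueA_mk, dif_pos (show 0 ≤ p by omega)]
          have h2 : (⟨0, by omega⟩ : Fin (p + 1)) = 0 := by apply Fin.ext; simp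
          have h1 : (⟨0, hi⟩ : Fin (q + 1)) = 0 := by apply Fin.ext; simp
          rw [h1, h2, ← hx0]
        have e2 : glueB w y ⟨0, hjlt⟩ = y ⟨0, hi⟩ := by
          rw [glueB_mk, dif_pos rfl]
          congr 1
        exact ⟨⟨0, hjlt⟩, Or.inl (by rw [e1, e2])⟩
      · have hjlt : p + (q + 1 - iv) < p + q + 1 := by omega
        have e1 : glueA u x ⟨p + (q + 1 - iv), hjlt⟩ = x ⟨iv, hi⟩ := by
          rw [glueA_mk, dif_neg (show ¬ p + (q + 1 - iv) ≤ p by omega)]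
          congr 1
          apply Fin.ext; simp; omega
        have e2 : glueB w y ⟨p + (q + 1 - iv), hjlt⟩ = y ⟨iv, hi⟩ := by
          rw [glueB_mk, dif_neg (show ¬ p + (q + 1 - iv) = 0 by omega),
            dif_neg (show ¬ p + (q + 1 - iv) ≤ p by omega)]
          congr 1
          apply Fin.ext; simp; omega
        exact ⟨⟨p + (q + 1 - iv), hjlt⟩, Or.inl (by rw [e1, e2])⟩
    · -- (x i.succ, y i.castSucc)
      obtain ⟨iv, hi⟩ := i
      rcases Nat.eq_zero_or_pos iv with rfl | hz
      · have hjlt : p + q < p + q + 1 := by omega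
        have hrlt : 0 < p + q + 1 := by omega
        have hrot : finRotate (p + q + 1) ⟨p + q, hjlt⟩ = ⟨0, hrlt⟩ := by
          rw [rot_val hpq]; apply Fin.ext; simp
        have e1 : glueA u x ⟨p + q, hjlt⟩ = x (⟨0, hi⟩ : Fin q).succ := by
          rw [glueA_mk, dif_neg (show ¬ p + q ≤ p by omega)]
          congr 1
          apply Fin.ext; simp [Fin.succ]; omega
        have e2 : glueB w y ⟨0, hrlt⟩ = y (⟨0, hi⟩ : Fin q).castSucc := by
          rw [glueB_mk, dif_pos rfl]
          congr 1
        exact ⟨⟨p + q, hjlt⟩, Or.inr (by rw [hrot, e1, e2])⟩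
      · have hjlt : p + q - iv < p + q + 1 := by omega
        have hrlt : p + q - iv + 1 < p + q + 1 := by omega
        have hrot : finRotate (p + q + 1) ⟨p + q - iv, hjlt⟩ = ⟨p + q - iv + 1, hrlt⟩ := by
          rw [rot_val hpq]; apply Fin.ext; simp; omega
        have e1 : glueA u x ⟨p + q - iv, hjlt⟩ = x (⟨iv, hi⟩ : Fin q).succ := by
          rw [glueA_mk, dif_neg (show ¬ p + q - iv ≤ p by omega)]
          congr 1
          apply Fin.ext; simp [Fin.succ]; omega
        have e2 : glueB w y ⟨p + q - iv + 1, hrlt⟩ = y (⟨iv, hi⟩ : Fin q).castSucc := by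
          rw [glueB_mk, dif_neg (show ¬ p + q - iv + 1 = 0 by omega),
            dif_neg (show ¬ p + q - iv + 1 ≤ p by omega)]
          congr 1
          apply Fin.ext; simp; omega
        exact ⟨⟨p + q - iv, hjlt⟩, Or.inr (by rw [hrot, e1, e2])⟩

lemma glue_verts (hx0 : x 0 = u 0) (hyq : y (Fin.last q) = w (Fin.last p)) :
    cycVerts (glueA u x) (glueB w y) = pathVerts u w ∪ pathVerts x y := by
  ext v
  constructor
  · rintro (⟨⟨jv, hj⟩, rfl⟩ | ⟨⟨jv, hj⟩, rfl⟩)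
    · simp only [Function.comp_apply]
      rw [glueA_mk]
      by_cases hp : jv ≤ p
      · rw [dif_pos hp]; exact Or.inl (Or.inl ⟨_, rfl⟩)
      · rw [dif_neg hp]; exact Or.inr (Or.inl ⟨_, rfl⟩)
    · simp only [Function.comp_apply]
      rw [glueB_mk]
      rcases Nat.eq_zero_or_pos jv with rfl | hz
      · rw [dif_pos rfl]; exact Or.inr (Or.inr ⟨_, rfl⟩)
      · by_cases hp : jv ≤ p
        · rw [dif_neg (by omega), dif_pos hp]; exact Or.inl (Or.inr ⟨_, rfl⟩)
        · rw [dif_neg (by omega), dif_neg hp]; exact Or.inr (Or.inr ⟨_, rfl⟩)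
  · rintro ((⟨i, rfl⟩ | ⟨i, rfl⟩) | (⟨i, rfl⟩ | ⟨i, rfl⟩))
    · obtain ⟨iv, hi⟩ := i
      refine Or.inl ⟨⟨iv, by omega⟩, ?_⟩
      simp only [Function.comp_apply]
      rw [glueA_mk, dif_pos (show iv ≤ p by omega)]
    · obtain ⟨iv, hi⟩ := i
      by_cases hp : iv < p
      · refine Or.inr ⟨⟨iv + 1, by omega⟩, ?_⟩
        simp only [Function.comp_apply]
        rw [glueB_mk, dif_neg (show ¬ iv + 1 = 0 by omega), dif_pos (show iv + 1 ≤ p by omega)]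
        have h1 : (⟨iv + 1 - 1, by omega⟩ : Fin (p + 1)) = ⟨iv, hi⟩ := by
          apply Fin.ext; simp
        rw [h1]
      · have hip : iv = p := by omega
        rcases Nat.eq_zero_or_pos q with hq | hq
        · refine Or.inr ⟨⟨0, by omega⟩, ?_⟩
          simp only [Function.comp_apply]
          rw [glueB_mk, dif_pos rfl]
          have h0 : (0 : Fin (q + 1)) = Fin.last q := by apply Fin.ext; simp [Fin.last, hq]
          rw [h0, hyq]
          have h1 : (⟨iv, hi⟩ : Fin (p + 1)) = Fin.last p := by
            apply Fin.ext; simp [Fin.last]; omega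
          rw [h1]
        · refine Or.inr ⟨⟨p + 1, by omega⟩, ?_⟩
          simp only [Function.comp_apply]
          rw [glueB_mk, dif_neg (show ¬ p + 1 = 0 by omega), dif_neg (show ¬ p + 1 ≤ p by omega)]
          have h0 : (⟨q + 1 + p - (p + 1), by omega⟩ : Fin (q + 1)) = Fin.last q := by
            apply Fin.ext; simp [Fin.last]; omega
          rw [h0, hyq]
          have h1 : (⟨iv, hi⟩ : Fin (p + 1)) = Fin.last p := by
            apply Fin.ext; simp [Fin.last]; omega
          rw [h1]
    · obtain ⟨iv, hi⟩ := i
      rcases Nat.eq_zero_or_pos iv with rfl | hz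
      · refine Or.inl ⟨⟨0, by omega⟩, ?_⟩
        simp only [Function.comp_apply]
        rw [glueA_mk, dif_pos (by omega : 0 ≤ p)]
        have h1 : (⟨0, hi⟩ : Fin (q + 1)) = 0 := by apply Fin.ext; simp
        have h2 : (⟨0, by omega⟩ : Fin (p + 1)) = 0 := by apply Fin.ext; simp
        rw [h1, h2, ← hx0]
      · refine Or.inl ⟨⟨p + (q + 1 - iv), by omega⟩, ?_⟩
        simp only [Function.comp_apply]
        rw [glueA_mk, dif_neg (show ¬ p + (q + 1 - iv) ≤ p by omega)]
        have h1 : (⟨q + 1 + p - (p + (q + 1 - iv)), by omega⟩ : Fin (q + 1)) = ⟨iv, hi⟩ := by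
          apply Fin.ext; simp; omega
        rw [h1]
    · obtain ⟨iv, hi⟩ := i
      rcases Nat.eq_zero_or_pos iv with rfl | hz
      · refine Or.inr ⟨⟨0, by omega⟩, ?_⟩
        simp only [Function.comp_apply]
        rw [glueB_mk, dif_pos rfl]
        have h1 : (⟨0, hi⟩ : Fin (q + 1)) = 0 := by apply Fin.ext; simp
        rw [h1]
      · refine Or.inr ⟨⟨p + (q + 1 - iv), by omega⟩, ?_⟩
        simp only [Function.comp_apply]
        rw [glueB_mk, dif_neg (show ¬ p + (q + 1 - iv) = 0 by omega),
          dif_neg (show ¬ p + (q + 1 - iv) ≤ p by omega)]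
        have h1 : (⟨q + 1 + p - (p + (q + 1 - iv)), by omega⟩ : Fin (q + 1)) = ⟨iv, hi⟩ := by
          apply Fin.ext; simp; omega
        rw [h1]

open Finset in
lemma glue_parity (hx0 : x 0 = u 0) (hyq : y (Fin.last q) = w (Fin.last p))
    (hpq : 1 ≤ p + q) :
    parity S (glueA u x) (glueB w y) =
      (-1 : ℝ) ^ (p + q + 1) * (pathSign S u w * pathSign S x y) := by
  rw [parity, Finset.prod_mul_distrib]
  rw [prod_fD S (glueA u x) (glueB w y), prod_fR S (glueA u x) (glueB w y)]
  have hrange : range (p + q + 1) = range ((p + 1) + q) := by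
    rw [show p + q + 1 = (p + 1) + q from by omega]
  have hD0 : ∏ k ∈ range (p + q + 1), fD S (glueA u x) (glueB w y) k =
      (∏ k ∈ range p, fO S u w k) * ∏ k ∈ range (q + 1), fD S x y k := by
    rw [hrange, prod_range_add]
    have h1 : ∏ k ∈ range (p + 1), fD S (glueA u x) (glueB w y) k =
        (∏ k ∈ range p, fO S u w k) * fD S x y 0 := by
      rw [prod_range_succ']
      congr 1
      · apply Finset.prod_congr rfl
        intro k hk
        rw [mem_range] at hk
        have hlt : k + 1 < p + q + 1 := by omega
        simp only [fD, fO]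
        rw [dif_pos hlt, dif_pos hk]
        have e1 : glueA u x ⟨k + 1, hlt⟩ = u ⟨k + 1, by omega⟩ := by
          rw [glueA_mk, dif_pos (show k + 1 ≤ p by omega)]
        have e2 : glueB w y ⟨k + 1, hlt⟩ = w ⟨k, by omega⟩ := by
          rw [glueB_mk, dif_neg (show ¬ k + 1 = 0 by omega),
            dif_pos (show k + 1 ≤ p by omega)]
          exact congrArg w (Fin.ext (by simp))
        rw [e1, e2]
      · have h0 : (0 : ℕ) < p + q + 1 := by omega
        simp only [fD]
        rw [dif_pos h0, dif_pos (show (0 : ℕ) < q + 1 by omega)]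
        have e1 : glueA u x ⟨0, h0⟩ = x ⟨0, by omega⟩ := by
          rw [glueA_mk, dif_pos (show (0 : ℕ) ≤ p by omega)]
          have hh : (⟨0, by omega⟩ : Fin (p + 1)) = 0 := by apply Fin.ext; simp
          rw [hh, ← hx0]
          exact congrArg x (Fin.ext (by simp))
        have e2 : glueB w y ⟨0, h0⟩ = y ⟨0, by omega⟩ := by
          rw [glueB_mk, dif_pos rfl]
          exact congrArg y (Fin.ext (by simp))
        rw [e1, e2]
    have h2 : ∏ k ∈ range q, fD S (glueA u x) (glueB w y) (p + 1 + k) =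
        ∏ k ∈ range q, fD S x y (k + 1) := by
      rw [← prod_range_reflect (fun k => fD S x y (k + 1)) q]
      apply Finset.prod_congr rfl
      intro k hk
      rw [mem_range] at hk
      have hlt : p + 1 + k < p + q + 1 := by omega
      simp only [fD]
      rw [dif_pos hlt, dif_pos (show q - 1 - k + 1 < q + 1 by omega)]
      have e1 : glueA u x ⟨p + 1 + k, hlt⟩ = x ⟨q - 1 - k + 1, by omega⟩ := by
        rw [glueA_mk, dif_neg (show ¬ p + 1 + k ≤ p by omega)]
        exact congrArg x (Fin.ext (by simp; omega))
      have e2 : glueB w y ⟨p + 1 + k, hlt⟩ = y ⟨q - 1 - k + 1, by omega⟩ := by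
        rw [glueB_mk, dif_neg (show ¬ p + 1 + k = 0 by omega),
          dif_neg (show ¬ p + 1 + k ≤ p by omega)]
        exact congrArg y (Fin.ext (by simp; omega))
      rw [e1, e2]
    rw [h1, h2, prod_range_succ' (fD S x y) q]
    ring
  have hR0 : ∏ k ∈ range (p + q + 1), fR S (glueA u x) (glueB w y) k =
      (∏ k ∈ range (p + 1), fD S u w k) * ∏ k ∈ range q, fO S x y k := by
    rw [hrange, prod_range_add]
    have h1 : ∏ k ∈ range (p + 1), fR S (glueA u x) (glueB w y) k =
        ∏ k ∈ range (p + 1), fD S u w k := by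
      apply Finset.prod_congr rfl
      intro k hk
      rw [mem_range] at hk
      have hlt : k < p + q + 1 := by omega
      simp only [fR, fD]
      rw [dif_pos hlt, dif_pos hk]
      have e1 : glueA u x ⟨k, hlt⟩ = u ⟨k, by omega⟩ := by
        rw [glueA_mk, dif_pos (show k ≤ p by omega)]
      by_cases hkp : k < p
      · have hlt2 : k + 1 < p + q + 1 := by omega
        have hrot : finRotate (p + q + 1) ⟨k, hlt⟩ = ⟨k + 1, hlt2⟩ := by
          rw [rot_val hpq]; apply Fin.ext; simp; omega
        have e2 : glueB w y ⟨k + 1, hlt2⟩ = w ⟨k, by omega⟩ := by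
          rw [glueB_mk, dif_neg (show ¬ k + 1 = 0 by omega),
            dif_pos (show k + 1 ≤ p by omega)]
          exact congrArg w (Fin.ext (by simp))
        rw [hrot, e1, e2]
      · have hkp' : k = p := by omega
        rcases Nat.eq_zero_or_pos q with hq | hq
        · have h0lt : 0 < p + q + 1 := by omega
          have hrot : finRotate (p + q + 1) ⟨k, hlt⟩ = ⟨0, h0lt⟩ := by
            rw [rot_val hpq]; apply Fin.ext; simp; omega
          have e2 : glueB w y ⟨0, h0lt⟩ = w ⟨k, by omega⟩ := by
            rw [glueB_mk, dif_pos rfl]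
            have hz : (0 : Fin (q + 1)) = Fin.last q := by
              apply Fin.ext; simp [Fin.last, hq]
            rw [hz, hyq]
            exact congrArg w (Fin.ext (by simp [Fin.last]; omega))
          rw [hrot, e1, e2]
        · have hlt2 : k + 1 < p + q + 1 := by omega
          have hrot : finRotate (p + q + 1) ⟨k, hlt⟩ = ⟨k + 1, hlt2⟩ := by
            rw [rot_val hpq]; apply Fin.ext; simp; omega
          have e2 : glueB w y ⟨k + 1, hlt2⟩ = w ⟨k, by omega⟩ := by
            rw [glueB_mk, dif_neg (show ¬ k + 1 = 0 by omega),
              dif_neg (show ¬ k + 1 ≤ p by omega)]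
            have hz : (⟨q + 1 + p - (k + 1), by omega⟩ : Fin (q + 1)) = Fin.last q := by
              apply Fin.ext; simp [Fin.last]; omega
            rw [hz, hyq]
            exact congrArg w (Fin.ext (by simp [Fin.last]; omega))
          rw [hrot, e1, e2]
    have h2 : ∏ k ∈ range q, fR S (glueA u x) (glueB w y) (p + 1 + k) =
        ∏ k ∈ range q, fO S x y k := by
      rw [← prod_range_reflect (fO S x y) q]
      apply Finset.prod_congr rfl
      intro k hk
      rw [mem_range] at hk
      have hlt : p + 1 + k < p + q + 1 := by omega
      simp only [fR, fO]
      rw [dif_pos hlt, dif_pos (show q - 1 - k < q by omega)]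
      have e1 : glueA u x ⟨p + 1 + k, hlt⟩ = x ⟨q - 1 - k + 1, by omega⟩ := by
        rw [glueA_mk, dif_neg (show ¬ p + 1 + k ≤ p by omega)]
        exact congrArg x (Fin.ext (by simp; omega))
      by_cases hkq : k = q - 1
      · have h0lt : 0 < p + q + 1 := by omega
        have hrot : finRotate (p + q + 1) ⟨p + 1 + k, hlt⟩ = ⟨0, h0lt⟩ := by
          rw [rot_val hpq]; apply Fin.ext; simp; omega
        have e2 : glueB w y ⟨0, h0lt⟩ = y ⟨q - 1 - k, by omega⟩ := by
          rw [glueB_mk, dif_pos rfl]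
          exact congrArg y (Fin.ext (by simp; omega))
        rw [hrot, e1, e2]
      · have hlt2 : p + 1 + k + 1 < p + q + 1 := by omega
        have hrot : finRotate (p + q + 1) ⟨p + 1 + k, hlt⟩ = ⟨p + 1 + k + 1, hlt2⟩ := by
          rw [rot_val hpq]; apply Fin.ext; simp; omega
        have e2 : glueB w y ⟨p + 1 + k + 1, hlt2⟩ = y ⟨q - 1 - k, by omega⟩ := by
          rw [glueB_mk, dif_neg (show ¬ p + 1 + k + 1 = 0 by omega),
            dif_neg (show ¬ p + 1 + k + 1 ≤ p by omega)]
          exact congrArg y (Fin.ext (by simp; omega))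
        rw [hrot, e1, e2]
    rw [h1, h2]
  rw [hD0, hR0, pathSign, pathSign, prod_fD S u w, prod_fO S u w, prod_fD S x y,
    prod_fO S x y]
  ring


end Glue

def cidx {r : ℕ} (J : Fin (r + 2)) (k : ℕ) : Fin (r + 2) :=
  ⟨(J.val + k) % (r + 2), Nat.mod_lt _ (by omega)⟩

lemma cidx_zero {r : ℕ} (J : Fin (r + 2)) : cidx J 0 = J := by
  apply Fin.ext
  show (J.val + 0) % (r + 2) = J.val
  rw [Nat.add_zero, Nat.mod_eq_of_lt J.isLt]

lemma cidx_succ {r : ℕ} (J : Fin (r + 2)) (k : ℕ) : cidx J (k + 1) = cidx J k + 1 := by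
  apply Fin.ext
  rw [Fin.add_def]
  show (J.val + (k + 1)) % (r + 2) = ((J.val + k) % (r + 2) + (1 : Fin (r + 2)).val) % (r + 2)
  rw [Fin.val_one]
  rw [show J.val + (k + 1) = J.val + k + 1 from by omega]
  conv_lhs => rw [Nat.add_mod (J.val + k) 1]
  rw [Nat.mod_eq_of_lt (show 1 < r + 2 by omega)]

lemma cidx_rot {r : ℕ} (J : Fin (r + 2)) (k : ℕ) :
    finRotate (r + 2) (cidx J k) = cidx J (k + 1) := by
  rw [finRotate_succ_apply, cidx_succ]

lemma cidx_top {r : ℕ} (J : Fin (r + 2)) : cidx J (r + 2) = J := by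
  apply Fin.ext
  show (J.val + (r + 2)) % (r + 2) = J.val
  rw [Nat.add_mod_right, Nat.mod_eq_of_lt J.isLt]

lemma cidx_modeq {r : ℕ} (J : Fin (r + 2)) {k l : ℕ} (h : cidx J k = cidx J l) :
    k ≡ l [MOD r + 2] := by
  have h1 : (J.val + k) % (r + 2) = (J.val + l) % (r + 2) := congrArg Fin.val h
  exact Nat.ModEq.add_left_cancel' J.val h1

lemma modeq_window {N a b : ℕ} (h : a ≡ b [MOD N]) (hab : a ≤ b) (hw : b - a < N) :
    a = b := by
  obtain ⟨c, hc⟩ := (Nat.modEq_iff_dvd' hab).mp h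
  rcases c with _ | c'
  · omega
  · exfalso
    have : N ≤ N * (c' + 1) := Nat.le_mul_of_pos_right N (by omega)
    omega

lemma cidx_inj {r : ℕ} (J : Fin (r + 2)) {k l : ℕ} (hk : k ≤ l) (hw : l - k < r + 2)
    (h : cidx J k = cidx J l) : k = l :=
  modeq_window (cidx_modeq J h) hk hw

open Finset in
lemma prod_cidx {r : ℕ} (J : Fin (r + 2)) (f : Fin (r + 2) → ℝ) :
    ∏ k ∈ range (r + 2), f (cidx J k) = ∏ j : Fin (r + 2), f j := by
  rw [← Fin.prod_univ_eq_prod_range (fun k => f (cidx J k)) (r + 2)]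
  have h1 : ∀ i : Fin (r + 2), cidx J i.val = J + i := by
    intro i
    apply Fin.ext
    rw [Fin.add_def]
    rfl
  calc ∏ i : Fin (r + 2), f (cidx J ↑i) = ∏ i : Fin (r + 2), f (J + i) :=
        Finset.prod_congr rfl (fun i _ => by rw [h1 i])
    _ = ∏ j : Fin (r + 2), f j := Equiv.prod_comp (Equiv.addLeft J) f

lemma cidx_exists {r : ℕ} (J K : Fin (r + 2)) :
    ∃ t, 1 ≤ t ∧ t ≤ r + 2 ∧ cidx J t = K := by
  have hJ := J.isLt
  have hK := K.isLt
  refine ⟨(K.val + (r + 2) - J.val - 1) % (r + 2) + 1,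
    Nat.succ_le_succ (Nat.zero_le _), ?_, ?_⟩
  · have := Nat.mod_lt (K.val + (r + 2) - J.val - 1) (show 0 < r + 2 by omega)
    omega
  · apply Fin.ext
    show (J.val + ((K.val + (r + 2) - J.val - 1) % (r + 2) + 1)) % (r + 2) = K.val
    have h3 : (K.val + (r + 2) - J.val - 1) % (r + 2) + 1 ≡
        K.val + (r + 2) - J.val [MOD r + 2] := by
      have h := (Nat.mod_modEq (K.val + (r + 2) - J.val - 1) (r + 2)).add_right 1
      rwa [show K.val + (r + 2) - J.val - 1 + 1 = K.val + (r + 2) - J.val from by omega] at h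
    have h4 := h3.add_left J.val
    rw [show J.val + (K.val + (r + 2) - J.val) = K.val + (r + 2) from by omega] at h4
    have h5 : (J.val + ((K.val + (r + 2) - J.val - 1) % (r + 2) + 1)) % (r + 2) =
        (K.val + (r + 2)) % (r + 2) := h4
    rw [h5, Nat.add_mod_right, Nat.mod_eq_of_lt hK]

lemma conclude (S : Matrix (Fin n) (Fin m) ℝ) {r : ℕ}
    (a : Fin r → Fin n) (b : Fin r → Fin m) (hC : IsCyc S a b) (hCe : parity S a b = 1)
    {p : ℕ} (u : Fin (p + 1) → Fin n) (w : Fin (p + 1) → Fin m) (hD : IsSRPath S u w)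
    (hedge : pathEdges u w ∩ cycEdges a b = ∅)
    (hvert : pathVerts u w ∩ cycVerts a b ⊆
      {Sum.inl (u 0), Sum.inr (w (Fin.last p))})
    {q : ℕ} (x : Fin (q + 1) → Fin n) (y : Fin (q + 1) → Fin m) (hA : IsSRPath S x y)
    (hx0 : x 0 = u 0) (hyq : y (Fin.last q) = w (Fin.last p))
    (hEsub : pathEdges x y ⊆ cycEdges a b) (hVsub : pathVerts x y ⊆ cycVerts a b)
    (hpq : 1 ≤ p + q) (hglue : parity S (glueA u x) (glueB w y) = 1) :
    TwoECyclesWithSRIntersection S := by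
  have hcross : ∀ s', s' ∈ pathVerts u w → s' ∈ pathVerts x y →
      s' = Sum.inl (u 0) ∨ s' = Sum.inr (w (Fin.last p)) := by
    intro s' hs1 hs2
    have := hvert ⟨hs1, hVsub hs2⟩
    simpa using this
  refine ⟨r, a, b, p + q + 1, glueA u x, glueB w y, hC, hCe,
    glue_isCyc hD hA hx0 hyq hcross hpq, hglue, ?_, ?_⟩
  · intro heq
    have hm : (u 0, w 0) ∈ cycEdges (glueA u x) (glueB w y) := by
      rw [glue_edges hx0 hyq hpq]
      exact Or.inl (Or.inl ⟨0, rfl⟩)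
    rw [← heq] at hm
    have h2 : (u 0, w 0) ∈ pathEdges u w ∩ cycEdges a b := ⟨Or.inl ⟨0, rfl⟩, hm⟩
    rw [hedge] at h2
    exact h2
  · have hE : cycEdges a b ∩ cycEdges (glueA u x) (glueB w y) = pathEdges x y := by
      rw [glue_edges hx0 hyq hpq]
      ext e
      constructor
      · rintro ⟨he1, he2 | he2⟩
        · exfalso
          have h2 : e ∈ pathEdges u w ∩ cycEdges a b := ⟨he2, he1⟩
          rw [hedge] at h2
          exact h2
        · exact he2
      · intro he
        exact ⟨hEsub he, Or.inr he⟩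
    have hV : cycVerts a b ∩ cycVerts (glueA u x) (glueB w y) = pathVerts x y := by
      rw [glue_verts hx0 hyq]
      ext s'
      constructor
      · rintro ⟨hs1, hs2 | hs2⟩
        · have := hvert ⟨hs2, hs1⟩
          simp only [Set.mem_insert_iff, Set.mem_singleton_iff] at this
          rcases this with h | h
          · rw [h, ← hx0]; exact Or.inl ⟨0, rfl⟩
          · rw [h, ← hyq]; exact Or.inr ⟨Fin.last q, rfl⟩
        · exact hs2
      · intro hs
        exact ⟨hVsub hs, Or.inr hs⟩
    rw [hE, hV]
    exact srIntersection_path x y hA.1 hA.2.1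


end SRGraph


open SRGraph in
/-- If `C = (r, a, b)` is an e-cycle of `G(S)` and `D = (p, u, w)` is an S-to-R path of
`G(S)` whose initial S-vertex `u 0` is a vertex `a J` of `C` and whose terminal R-vertex
`w p` is a vertex `b K` of `C`, such that no edge of `D` is an edge of `C` and no vertex
of `D` other than `u 0` and `w p` lies on `C`, then `G(S)` contains two e-cycles with
distinct edge sets having S-to-R intersection. -/
theorem two_ecycles_of_slicing_path {n m : ℕ} (S : Matrix (Fin n) (Fin m) ℝ)
    {r : ℕ} (a : Fin r → Fin n) (b : Fin r → Fin m)
    (hC : IsCyc S a b) (hCe : parity S a b = 1)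
    {p : ℕ} (u : Fin (p + 1) → Fin n) (w : Fin (p + 1) → Fin m)
    (hD : IsSRPath S u w)
    (J : Fin r) (hu0 : u 0 = a J) (K : Fin r) (hwp : w (Fin.last p) = b K)
    (hedge : pathEdges u w ∩ cycEdges a b = ∅)
    (hvert : pathVerts u w ∩ cycVerts a b ⊆
      {Sum.inl (u 0), Sum.inr (w (Fin.last p))}) :
    TwoECyclesWithSRIntersection S := by
  obtain ⟨r2, rfl⟩ : ∃ r2, r = r2 + 2 := ⟨r - 2, by have := hC.1; omega⟩
  obtain ⟨t, ht1, htN, hKt⟩ := cidx_exists J K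
  obtain ⟨t', rfl⟩ : ∃ t', t = t' + 1 := ⟨t - 1, by omega⟩
  have hainj := hC.2.1
  have hbinj := hC.2.2.1
  have hd0 := hC.2.2.2.1
  have hd1 := hC.2.2.2.2
  set X1 : Fin (t' + 1) → Fin n := fun i => a (cidx J i.val) with hX1
  set Y1 : Fin (t' + 1) → Fin m := fun i => b (cidx J (i.val + 1)) with hY1
  set s : ℕ := r2 + 2 - (t' + 1) with hs
  set X2 : Fin (s + 1) → Fin n := fun i => a (cidx J (r2 + 2 - i.val)) with hX2
  set Y2 : Fin (s + 1) → Fin m := fun i => b (cidx J (r2 + 2 - i.val)) with hY2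
  -- arc 1 is an S-to-R path
  have hX1inj : Function.Injective X1 := by
    intro i j h
    have h3 := cidx_modeq J (hainj h)
    have hi := i.isLt
    have hj := j.isLt
    apply Fin.ext
    rcases le_total i.val j.val with hle | hle
    · exact modeq_window h3 hle (by omega)
    · exact (modeq_window h3.symm hle (by omega)).symm
  have hY1inj : Function.Injective Y1 := by
    intro i j h
    have h3 := cidx_modeq J (hbinj h)
    have hi := i.isLt
    have hj := j.isLt
    apply Fin.ext
    rcases le_total i.val j.val with hle | hle
    · have := modeq_window h3 (by omega) (by omega); omega
    · have := modeq_window h3.symm (by omega) (by omega); omega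
  have eX1succ : ∀ i : Fin t', X1 i.succ = a (cidx J (i.val + 1)) := by
    intro i; simp only [hX1, Fin.val_succ]
  have eY1cast : ∀ i : Fin t', Y1 i.castSucc = b (cidx J (i.val + 1)) := by
    intro i; simp only [hY1, Fin.coe_castSucc]
  have hA1 : IsSRPath S X1 Y1 := by
    refine ⟨hX1inj, hY1inj, ?_, ?_⟩
    · intro i
      have h := hd1 (cidx J i.val)
      rwa [cidx_rot] at h
    · intro i
      rw [eX1succ i, eY1cast i]
      exact hd0 _
  have hx01 : X1 0 = u 0 := by
    simp only [hX1, Fin.val_zero, cidx_zero, hu0]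
  have hyq1 : Y1 (Fin.last t') = w (Fin.last p) := by
    simp only [hY1, Fin.val_last]
    rw [hKt, ← hwp]
  have hEsub1 : pathEdges X1 Y1 ⊆ cycEdges a b := by
    rintro e (⟨i, rfl⟩ | ⟨i, rfl⟩)
    · refine ⟨cidx J i.val, Or.inr ?_⟩
      rw [cidx_rot]
    · refine ⟨cidx J (i.val + 1), Or.inl ?_⟩
      rw [eX1succ i, eY1cast i]
  have hVsub1 : pathVerts X1 Y1 ⊆ cycVerts a b := by
    rintro v (⟨i, rfl⟩ | ⟨i, rfl⟩)
    · exact Or.inl ⟨cidx J i.val, rfl⟩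
    · exact Or.inr ⟨cidx J (i.val + 1), rfl⟩
  have hpq1 : 1 ≤ p + t' := by
    by_contra hcon
    have hp0 : p = 0 := by omega
    have ht'0 : t' = 0 := by omega
    subst hp0
    have hKJ : K = cidx J 1 := by rw [← hKt, ht'0]
    have hrotJ : finRotate (r2 + 2) J = cidx J 1 := by
      have h := cidx_rot J 0
      rwa [cidx_zero] at h
    have hmem : (u 0, w 0) ∈ pathEdges u w ∩ cycEdges a b := by
      refine ⟨Or.inl ⟨0, rfl⟩, ⟨J, Or.inr ?_⟩⟩
      rw [hrotJ, ← hKJ, ← hu0, ← hwp, show (Fin.last 0 : Fin 1) = 0 from rfl]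
    rw [hedge] at hmem
    exact hmem
  -- arc 2 is an S-to-R path
  have hX2inj : Function.Injective X2 := by
    intro i j h
    have h3 := cidx_modeq J (hainj h)
    have hi := i.isLt
    have hj := j.isLt
    apply Fin.ext
    rcases le_total i.val j.val with hle | hle
    · have := modeq_window h3.symm (by omega) (by omega); omega
    · have := modeq_window h3 (by omega) (by omega); omega
  have hY2inj : Function.Injective Y2 := by
    intro i j h
    have h3 := cidx_modeq J (hbinj h)
    have hi := i.isLt
    have hj := j.isLt
    apply Fin.ext
    rcases le_total i.val j.val with hle | hle
    · have := modeq_window h3.symm (by omega) (by omega); omega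
    · have := modeq_window h3 (by omega) (by omega); omega
  have eX2succ : ∀ i : Fin s, X2 i.succ = a (cidx J (r2 + 2 - i.val - 1)) := by
    intro i
    have hii := i.isLt
    have h : X2 i.succ = a (cidx J (r2 + 2 - (i.val + 1))) := by
      simp only [hX2, Fin.val_succ]
    rw [h]
    exact congrArg (fun z : ℕ => a (cidx J z)) (by omega)
  have eY2cast : ∀ i : Fin s, Y2 i.castSucc = b (cidx J (r2 + 2 - i.val)) := by
    intro i; simp only [hY2, Fin.coe_castSucc]
  have eY2need : ∀ i : Fin s, b (cidx J (r2 + 2 - i.val)) =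
      b (cidx J (r2 + 2 - i.val - 1 + 1)) := by
    intro i
    have hii := i.isLt
    exact congrArg (fun z : ℕ => b (cidx J z)) (by omega)
  have hA2 : IsSRPath S X2 Y2 := by
    refine ⟨hX2inj, hY2inj, ?_, ?_⟩
    · intro i
      exact hd0 _
    · intro i
      have hii := i.isLt
      rw [eX2succ i, eY2cast i, eY2need i]
      have h := hd1 (cidx J (r2 + 2 - i.val - 1))
      rwa [cidx_rot] at h
  have hx02 : X2 0 = u 0 := by
    simp only [hX2, Fin.val_zero, Nat.sub_zero, cidx_top, hu0]
  have hyq2 : Y2 (Fin.last s) = w (Fin.last p) := by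
    simp only [hY2, Fin.val_last]
    rw [show r2 + 2 - s = t' + 1 from by omega, hKt, ← hwp]
  have hEsub2 : pathEdges X2 Y2 ⊆ cycEdges a b := by
    rintro e (⟨i, rfl⟩ | ⟨i, rfl⟩)
    · exact ⟨cidx J (r2 + 2 - i.val), Or.inl rfl⟩
    · have hii := i.isLt
      refine ⟨cidx J (r2 + 2 - i.val - 1), Or.inr ?_⟩
      rw [cidx_rot, eX2succ i, eY2cast i, eY2need i]
  have hVsub2 : pathVerts X2 Y2 ⊆ cycVerts a b := by
    rintro v (⟨i, rfl⟩ | ⟨i, rfl⟩)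
    · exact Or.inl ⟨cidx J (r2 + 2 - i.val), rfl⟩
    · exact Or.inr ⟨cidx J (r2 + 2 - i.val), rfl⟩
  have hpq2 : 1 ≤ p + s := by
    by_contra hcon
    have hp0 : p = 0 := by omega
    have htn : t' + 1 = r2 + 2 := by omega
    subst hp0
    have hKJ : K = J := by rw [← hKt, htn, cidx_top]
    have hmem : (u 0, w 0) ∈ pathEdges u w ∩ cycEdges a b := by
      refine ⟨Or.inl ⟨0, rfl⟩, ⟨J, Or.inl ?_⟩⟩
      rw [← hu0, ← hKJ, ← hwp, show (Fin.last 0 : Fin 1) = 0 from rfl]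
    rw [hedge] at hmem
    exact hmem
  -- parity bookkeeping
  have hP1 := glue_parity (S := S) (u := u) (w := w) (x := X1) (y := Y1) hx01 hyq1 hpq1
  have hP2 := glue_parity (S := S) (u := u) (w := w) (x := X2) (y := Y2) hx02 hyq2 hpq2
  have hsD := pathSign_mul_self hD
  have hc1 : pathSign S X1 Y1 =
      (∏ k ∈ Finset.range (t' + 1),
        Real.sign (S (a (cidx J k)) (b (cidx J (k + 1))))) *
      (∏ k ∈ Finset.range t',
        Real.sign (S (a (cidx J (k + 1))) (b (cidx J (k + 1))))) := by
    rw [pathSign]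
    congr 1
    · rw [← Fin.prod_univ_eq_prod_range
        (fun k => Real.sign (S (a (cidx J k)) (b (cidx J (k + 1))))) (t' + 1)]
    · rw [← Fin.prod_univ_eq_prod_range
        (fun k => Real.sign (S (a (cidx J (k + 1))) (b (cidx J (k + 1))))) t']
      apply Finset.prod_congr rfl
      intro i _
      rw [eX1succ i, eY1cast i]
  have hc2 : pathSign S X2 Y2 =
      (∏ k ∈ Finset.range (s + 1),
        Real.sign (S (a (cidx J (r2 + 2 - k))) (b (cidx J (r2 + 2 - k))))) *
      (∏ k ∈ Finset.range s,
        Real.sign (S (a (cidx J (r2 + 2 - k - 1))) (b (cidx J (r2 + 2 - k - 1 + 1))))) := by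
    rw [pathSign]
    congr 1
    · rw [← Fin.prod_univ_eq_prod_range
        (fun k => Real.sign (S (a (cidx J (r2 + 2 - k))) (b (cidx J (r2 + 2 - k))))) (s + 1)]
    · rw [← Fin.prod_univ_eq_prod_range
        (fun k => Real.sign (S (a (cidx J (r2 + 2 - k - 1)))
          (b (cidx J (r2 + 2 - k - 1 + 1))))) s]
      apply Finset.prod_congr rfl
      intro i _
      rw [eX2succ i, eY2cast i, eY2need i]
  have hF : (∏ k ∈ Finset.range (t' + 1),
        Real.sign (S (a (cidx J k)) (b (cidx J (k + 1))))) *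
      (∏ k ∈ Finset.range s,
        Real.sign (S (a (cidx J (r2 + 2 - k - 1))) (b (cidx J (r2 + 2 - k - 1 + 1))))) =
      ∏ k ∈ Finset.range (r2 + 2),
        Real.sign (S (a (cidx J k)) (b (cidx J (k + 1)))) := by
    have hrefl : (∏ k ∈ Finset.range s,
        Real.sign (S (a (cidx J (r2 + 2 - k - 1))) (b (cidx J (r2 + 2 - k - 1 + 1))))) =
        ∏ k ∈ Finset.range s,
          Real.sign (S (a (cidx J (t' + 1 + k))) (b (cidx J (t' + 1 + k + 1)))) := by
      rw [← Finset.prod_range_reflect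
        (fun k => Real.sign (S (a (cidx J (t' + 1 + k))) (b (cidx J (t' + 1 + k + 1))))) s]
      apply Finset.prod_congr rfl
      intro k hk
      rw [Finset.mem_range] at hk
      exact congrArg
        (fun z : ℕ => Real.sign (S (a (cidx J z)) (b (cidx J (z + 1))))) (by omega)
    rw [hrefl, ← Finset.prod_range_add
      (fun k => Real.sign (S (a (cidx J k)) (b (cidx J (k + 1))))) (t' + 1) s,
      show t' + 1 + s = r2 + 2 from by omega]
  have hG : (∏ k ∈ Finset.range t',
        Real.sign (S (a (cidx J (k + 1))) (b (cidx J (k + 1))))) *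
      (∏ k ∈ Finset.range (s + 1),
        Real.sign (S (a (cidx J (r2 + 2 - k))) (b (cidx J (r2 + 2 - k))))) =
      ∏ k ∈ Finset.range (r2 + 2),
        Real.sign (S (a (cidx J k)) (b (cidx J k))) := by
    have hrefl2 : (∏ k ∈ Finset.range (s + 1),
        Real.sign (S (a (cidx J (r2 + 2 - k))) (b (cidx J (r2 + 2 - k))))) =
        ∏ k ∈ Finset.range (s + 1),
          Real.sign (S (a (cidx J (t' + 1 + k))) (b (cidx J (t' + 1 + k)))) := by
      rw [← Finset.prod_range_reflect
        (fun k => Real.sign (S (a (cidx J (t' + 1 + k))) (b (cidx J (t' + 1 + k))))) (s + 1)]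
      apply Finset.prod_congr rfl
      intro k hk
      rw [Finset.mem_range] at hk
      exact congrArg
        (fun z : ℕ => Real.sign (S (a (cidx J z)) (b (cidx J z)))) (by omega)
    have htop : Real.sign (S (a (cidx J (t' + 1 + s))) (b (cidx J (t' + 1 + s)))) =
        Real.sign (S (a (cidx J 0)) (b (cidx J 0))) := by
      rw [show t' + 1 + s = r2 + 2 from by omega, cidx_top, cidx_zero]
    have hmid : (∏ k ∈ Finset.range t',
          Real.sign (S (a (cidx J (k + 1))) (b (cidx J (k + 1))))) *
        (∏ k ∈ Finset.range s,
          Real.sign (S (a (cidx J (t' + 1 + k))) (b (cidx J (t' + 1 + k))))) =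
        ∏ k ∈ Finset.range (r2 + 1),
          Real.sign (S (a (cidx J (k + 1))) (b (cidx J (k + 1)))) := by
      have hsh : (∏ k ∈ Finset.range s,
          Real.sign (S (a (cidx J (t' + 1 + k))) (b (cidx J (t' + 1 + k))))) =
          ∏ k ∈ Finset.range s,
            Real.sign (S (a (cidx J (t' + k + 1))) (b (cidx J (t' + k + 1)))) := by
        apply Finset.prod_congr rfl
        intro k _
        exact congrArg
          (fun z : ℕ => Real.sign (S (a (cidx J z)) (b (cidx J z)))) (by omega)
      rw [hsh, ← Finset.prod_range_add
        (fun k => Real.sign (S (a (cidx J (k + 1))) (b (cidx J (k + 1))))) t' s,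
        show t' + s = r2 + 1 from by omega]
    rw [hrefl2, Finset.prod_range_succ, htop, ← mul_assoc, hmid]
    rw [Finset.prod_range_succ'
      (fun k => Real.sign (S (a (cidx J k)) (b (cidx J k)))) (r2 + 1)]
  have hFG : (∏ k ∈ Finset.range (r2 + 2),
        Real.sign (S (a (cidx J k)) (b (cidx J (k + 1))))) *
      (∏ k ∈ Finset.range (r2 + 2),
        Real.sign (S (a (cidx J k)) (b (cidx J k)))) = (-1 : ℝ) ^ (r2 + 2) := by
    have hFr : (∏ k ∈ Finset.range (r2 + 2),
        Real.sign (S (a (cidx J k)) (b (cidx J (k + 1))))) =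
        ∏ j : Fin (r2 + 2), Real.sign (S (a j) (b (finRotate (r2 + 2) j))) := by
      rw [← prod_cidx J (fun j => Real.sign (S (a j) (b (finRotate (r2 + 2) j))))]
      apply Finset.prod_congr rfl
      intro k _
      rw [cidx_rot]
    have hGr : (∏ k ∈ Finset.range (r2 + 2),
        Real.sign (S (a (cidx J k)) (b (cidx J k)))) =
        ∏ j : Fin (r2 + 2), Real.sign (S (a j) (b j)) :=
      prod_cidx J (fun j => Real.sign (S (a j) (b j)))
    rw [hFr, hGr]
    rw [parity, Finset.prod_mul_distrib] at hCe
    have hpow : ((-1 : ℝ)) ^ (r2 + 2) * ((-1 : ℝ)) ^ (r2 + 2) = 1 := by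
      rw [← pow_add, show r2 + 2 + (r2 + 2) = 2 * (r2 + 2) from by omega, pow_mul]
      norm_num
    calc (∏ j : Fin (r2 + 2), Real.sign (S (a j) (b (finRotate (r2 + 2) j)))) *
          ∏ j : Fin (r2 + 2), Real.sign (S (a j) (b j))
        = ((-1 : ℝ) ^ (r2 + 2) * (-1 : ℝ) ^ (r2 + 2)) *
          ((∏ j : Fin (r2 + 2), Real.sign (S (a j) (b (finRotate (r2 + 2) j)))) *
            ∏ j : Fin (r2 + 2), Real.sign (S (a j) (b j))) := by rw [hpow, one_mul]
      _ = (-1 : ℝ) ^ (r2 + 2) * ((-1 : ℝ) ^ (r2 + 2) *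
            ((∏ j : Fin (r2 + 2), Real.sign (S (a j) (b j))) *
              ∏ j : Fin (r2 + 2), Real.sign (S (a j) (b (finRotate (r2 + 2) j))))) := by
          ring
      _ = (-1 : ℝ) ^ (r2 + 2) * 1 := by rw [hCe]
      _ = (-1 : ℝ) ^ (r2 + 2) := mul_one _
  have hArc : pathSign S X1 Y1 * pathSign S X2 Y2 = (-1 : ℝ) ^ (r2 + 2) := by
    rw [hc1, hc2]
    rw [show ((∏ k ∈ Finset.range (t' + 1),
          Real.sign (S (a (cidx J k)) (b (cidx J (k + 1))))) *
        (∏ k ∈ Finset.range t',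
          Real.sign (S (a (cidx J (k + 1))) (b (cidx J (k + 1)))))) *
        ((∏ k ∈ Finset.range (s + 1),
          Real.sign (S (a (cidx J (r2 + 2 - k))) (b (cidx J (r2 + 2 - k))))) *
        (∏ k ∈ Finset.range s,
          Real.sign (S (a (cidx J (r2 + 2 - k - 1))) (b (cidx J (r2 + 2 - k - 1 + 1)))))) =
        ((∏ k ∈ Finset.range (t' + 1),
          Real.sign (S (a (cidx J k)) (b (cidx J (k + 1))))) *
        (∏ k ∈ Finset.range s,
          Real.sign (S (a (cidx J (r2 + 2 - k - 1))) (b (cidx J (r2 + 2 - k - 1 + 1)))))) *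
        ((∏ k ∈ Finset.range t',
          Real.sign (S (a (cidx J (k + 1))) (b (cidx J (k + 1))))) *
        (∏ k ∈ Finset.range (s + 1),
          Real.sign (S (a (cidx J (r2 + 2 - k))) (b (cidx J (r2 + 2 - k)))))) from by ring]
    rw [hF, hG]
    exact hFG
  have hPP : parity S (glueA u X1) (glueB w Y1) *
      parity S (glueA u X2) (glueB w Y2) = -1 := by
    rw [hP1, hP2]
    have hring : ∀ A B C D E : ℝ,
        (A * (B * C)) * (D * (B * E)) = (A * D) * (B * B) * (C * E) := by
      intros; ring
    rw [hring]
    rw [hsD, hArc, mul_one]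
    rw [← pow_add, ← pow_add,
      show p + t' + 1 + (p + s + 1) + (r2 + 2) = 2 * (p + r2 + 2) + 1 from by omega,
      pow_succ, pow_mul]
    norm_num
  have hcross1 : ∀ s', s' ∈ pathVerts u w → s' ∈ pathVerts X1 Y1 →
      s' = Sum.inl (u 0) ∨ s' = Sum.inr (w (Fin.last p)) := by
    intro s' h1 h2
    simpa using hvert ⟨h1, hVsub1 h2⟩
  have hdi := mul_self_eq_one_iff.mp
    (parity_mul_self (glue_isCyc hD hA1 hx01 hyq1 hcross1 hpq1))
  rcases hdi with hone | hminus
  · exact conclude S a b hC hCe u w hD hedge hvert X1 Y1 hA1 hx01 hyq1 hEsub1 hVsub1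
      hpq1 hone
  · have hone2 : parity S (glueA u X2) (glueB w Y2) = 1 := by
      rw [hminus] at hPP
      linarith
    exact conclude S a b hC hCe u w hD hedge hvert X2 Y2 hA2 hx02 hyq2 hEsub2 hVsub2
      hpq2 hone2
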